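/- For every u ∈ W₀^{1,2}(-θ,θ), one has ∫_{-θ}^{θ} ((u')² - u²) ≥ (1 - (θ/π)²) ∫_{-θ}^{θ} (u')² - (1/(2θ)) (∫_{-θ}^{θ} u)². -/

import Mathlib

open Real MeasureTheory Set intervalIntegral

lemma swap_tri {a b : ℝ} (hab : a ≤ b) {f g : ℝ → ℂ}
    (hf : IntegrableOn f (Ioc a b)) (hg : Continuous g) :
    (∫ t in a..b, g t * ∫ s in a..t, f s) = ∫ s in a..b, f s * ∫ t in s..b, g t := by
  set μ := volume.restrict (Ioc a b) with hμ
  set F : ℝ × ℝ → ℂ := fun q => if q.2 ≤ q.1 then g q.1 * f q.2 else 0 with hF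
  have hFind : F = Set.indicator {q : ℝ × ℝ | q.2 ≤ q.1} (fun q => g q.1 * f q.2) := by
    funext q
    by_cases h : q.2 ≤ q.1 <;> simp [hF, h, Set.indicator]
  have hmeas : MeasurableSet {q : ℝ × ℝ | q.2 ≤ q.1} :=
    measurableSet_le measurable_snd measurable_fst
  have hgI : IntegrableOn g (Ioc a b) := hg.continuousOn.integrableOn_Icc.mono_set Ioc_subset_Icc_self
  have hFaesm : AEStronglyMeasurable F (μ.prod μ) := by
    rw [hFind]
    exact ((hg.aestronglyMeasurable.comp_fst).mul (hf.aestronglyMeasurable.comp_snd)).indicator hmeas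
  have hFint : Integrable F (μ.prod μ) := by
    refine Integrable.mono' (hgI.norm.mul_prod hf.norm) hFaesm ?_
    refine Filter.Eventually.of_forall fun q => ?_
    by_cases h : q.2 ≤ q.1
    · simp [hF, h, norm_mul, le_refl]
    · simp [hF, h]
      positivity
  have hswap := MeasureTheory.integral_integral_swap (f := fun t s => F (t, s))
    (μ := μ) (ν := μ) (by exact hFint)
  calc (∫ t in a..b, g t * ∫ s in a..t, f s) = ∫ t, (∫ s, F (t, s) ∂μ) ∂μ := by
        rw [intervalIntegral.integral_of_le hab]
        refine (setIntegral_congr_fun measurableSet_Ioc fun t ht => ?_).symm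
        have : (fun s => F (t, s)) = Set.indicator (Iic t) (fun s => g t * f s) := by
          funext s
          by_cases h : s ≤ t <;> simp [hF, h, Set.indicator]
        rw [this, MeasureTheory.integral_indicator measurableSet_Iic, hμ,
          Measure.restrict_restrict measurableSet_Iic]
        have : Iic t ∩ Ioc a b = Ioc a t := by
          ext x; simp only [mem_inter_iff, mem_Iic, mem_Ioc]
          exact ⟨fun h => ⟨h.2.1, h.1⟩, fun h => ⟨h.2, h.1, h.2.trans ht.2⟩⟩
        rw [this, intervalIntegral.integral_of_le ht.1.le, MeasureTheory.integral_const_mul]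
    _ = ∫ s, (∫ t, F (t, s) ∂μ) ∂μ := hswap
    _ = ∫ s in a..b, f s * ∫ t in s..b, g t := by
        rw [intervalIntegral.integral_of_le hab]
        refine setIntegral_congr_fun measurableSet_Ioc fun s hs => ?_
        have : (fun t => F (t, s)) = Set.indicator (Ici s) (fun t => g t * f s) := by
          funext t
          by_cases h : s ≤ t <;> simp [hF, h, Set.indicator]
        rw [this, MeasureTheory.integral_indicator measurableSet_Ici, hμ,
          Measure.restrict_restrict measurableSet_Ici]
        have : Ici s ∩ Ioc a b = Icc s b := by
          ext x; simp only [mem_inter_iff, mem_Ici, mem_Ioc, mem_Icc]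
          exact ⟨fun h => ⟨h.1, h.2.2⟩, fun h => ⟨h.1, hs.1.trans_le h.1, h.2⟩⟩
        rw [this, integral_Icc_eq_integral_Ioc, ← intervalIntegral.integral_of_le hs.2,
          intervalIntegral.integral_mul_const, mul_comm]

lemma aesm_liftIoc {T : ℝ} [hT : Fact (0 < T)] (a : ℝ) {f : ℝ → ℂ}
    (hf : AEStronglyMeasurable f (volume.restrict (Ioc a (a + T)))) :
    AEStronglyMeasurable (AddCircle.liftIoc T a f) (volume : Measure (AddCircle T)) := by
  set e := AddCircle.measurableEquivIoc T a with he
  have hsymm : ⇑e.symm = fun x : Ioc a (a + T) => ((x : ℝ) : AddCircle T) := rfl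
  set ν : Measure (Ioc a (a + T)) := Measure.comap Subtype.val volume with hν
  have hmapval : Measure.map Subtype.val ν = volume.restrict (Ioc a (a + T)) :=
    map_comap_subtype_coe measurableSet_Ioc volume
  have hmap : Measure.map e.symm ν = (volume : Measure (AddCircle T)) := by
    rw [hsymm]
    have : (fun x : Ioc a (a + T) => ((x : ℝ) : AddCircle T))
        = (fun y : ℝ => (y : AddCircle T)) ∘ Subtype.val := rfl
    rw [this, ← Measure.map_map AddCircle.measurable_mk' measurable_subtype_coe, hmapval,
      (AddCircle.measurePreserving_mk T a).map_eq]
  rw [← hmap, (e.symm.measurableEmbedding).aestronglyMeasurable_map_iff]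
  have : (AddCircle.liftIoc T a f) ∘ e.symm = f ∘ Subtype.val := by
    funext x
    exact AddCircle.liftIoc_coe_apply x.2
  rw [this]
  exact (MeasurableEmbedding.subtype_coe measurableSet_Ioc).aestronglyMeasurable_map_iff.mp
    (by rw [hmapval]; exact hf)

lemma parseval_ioc {T : ℝ} [hT : Fact (0 < T)] (a : ℝ) {f : ℝ → ℂ}
    (hm : AEStronglyMeasurable f (volume.restrict (Ioc a (a + T))))
    (hi : IntegrableOn (fun x => ‖f x‖ ^ 2) (Ioc a (a + T))) :
    Summable (fun n : ℤ => ‖fourierCoeff (AddCircle.liftIoc T a f) n‖ ^ 2) ∧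
    ∑' n : ℤ, ‖fourierCoeff (AddCircle.liftIoc T a f) n‖ ^ 2
      = (1 / T) * ∫ x in a..(a + T), ‖f x‖ ^ 2 := by
  have hT0 : (0:ℝ) < T := hT.out
  have hρ : MemLp f 2 (volume.restrict (Ioc a (a + T))) :=
    (memLp_two_iff_integrable_sq_norm hm).mpr hi
  set F := AddCircle.liftIoc T a f with hFdef
  have hFm : AEStronglyMeasurable F (volume : Measure (AddCircle T)) := aesm_liftIoc a hm
  have hvol : (volume : Measure (AddCircle T)) = ENNReal.ofReal T • AddCircle.haarAddCircle :=
    AddCircle.volume_eq_smul_haarAddCircle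
  have hc0 : (ENNReal.ofReal T) ≠ 0 := (ENNReal.ofReal_pos.mpr hT0).ne'
  have hhaar : (AddCircle.haarAddCircle : Measure (AddCircle T))
      = (ENNReal.ofReal T)⁻¹ • (volume : Measure (AddCircle T)) := by
    rw [hvol, smul_smul, ENNReal.inv_mul_cancel hc0 ENNReal.ofReal_ne_top, one_smul]
  have hae : (F ∘ (fun x : ℝ => (x : AddCircle T)))
      =ᵐ[volume.restrict (Ioc a (a + T))] f := by
    refine (ae_restrict_iff' measurableSet_Ioc).mpr (Filter.Eventually.of_forall fun x hx => ?_)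
    exact AddCircle.liftIoc_coe_apply hx
  have heLp : eLpNorm F 2 (volume : Measure (AddCircle T))
      = eLpNorm f 2 (volume.restrict (Ioc a (a + T))) := by
    rw [← eLpNorm_comp_measurePreserving hFm (AddCircle.measurePreserving_mk T a),
      eLpNorm_congr_ae hae]
  have hFlp : MemLp F 2 (AddCircle.haarAddCircle : Measure (AddCircle T)) := by
    refine ⟨hFm.mono_ac (by rw [hhaar]; exact Measure.smul_absolutelyContinuous), ?_⟩
    rw [hhaar, eLpNorm_smul_measure_of_ne_top (by norm_num), heLp]
    refine ENNReal.mul_lt_top ?_ hρ.2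
    exact (ENNReal.rpow_lt_top_of_nonneg (by norm_num) (ENNReal.inv_ne_top.mpr hc0)).trans_le le_top
  set FL := hFlp.toLp F with hFL
  have hcoeff : ∀ n : ℤ, fourierCoeff (⇑FL) n = fourierCoeff F n := by
    intro n
    exact integral_congr_ae ((hFlp.coeFn_toLp).mono fun x hx => by simp only [hFL, hx])
  have hrepr : ∀ n : ℤ, ‖(fourierBasis.repr FL) n‖ = ‖fourierCoeff F n‖ := fun n => by
    rw [fourierBasis_repr, hcoeff n]
  have hsummable : Summable (fun n : ℤ => ‖fourierCoeff F n‖ ^ 2) := by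
    have h2 := (lp.memℓp (fourierBasis.repr FL)).summable
      (by norm_num : (0:ℝ) < (2 : ENNReal).toReal)
    refine h2.congr fun n => ?_
    rw [hrepr n, show ((2:ENNReal)).toReal = ((2:ℕ):ℝ) by norm_num, Real.rpow_natCast]
  have hint : (∫ t : AddCircle T, ‖(⇑FL) t‖ ^ 2 ∂AddCircle.haarAddCircle)
      = ∫ t : AddCircle T, ‖F t‖ ^ 2 ∂AddCircle.haarAddCircle :=
    integral_congr_ae ((hFlp.coeFn_toLp).mono fun x hx => by simp only [hFL, hx])
  have hpre := AddCircle.intervalIntegral_preimage T a (fun z => ‖F z‖ ^ 2)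
  have hvint : (∫ z : AddCircle T, ‖F z‖ ^ 2)
      = T * ∫ z : AddCircle T, ‖F z‖ ^ 2 ∂AddCircle.haarAddCircle := by
    rw [hvol, MeasureTheory.integral_smul_measure, ENNReal.toReal_ofReal hT0.le, smul_eq_mul]
  have hIoc : (∫ x in a..(a + T), ‖F ↑x‖ ^ 2) = ∫ x in a..(a + T), ‖f x‖ ^ 2 := by
    rw [intervalIntegral.integral_of_le (by linarith : a ≤ a + T),
      intervalIntegral.integral_of_le (by linarith : a ≤ a + T)]
    refine setIntegral_congr_fun measurableSet_Ioc fun x hx => ?_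
    rw [show F ↑x = f x from AddCircle.liftIoc_coe_apply hx]
  refine ⟨hsummable, ?_⟩
  have hsum : (∑' n : ℤ, ‖fourierCoeff F n‖ ^ 2)
      = ∫ t : AddCircle T, ‖F t‖ ^ 2 ∂AddCircle.haarAddCircle := by
    rw [← hint, ← tsum_sq_fourierCoeff FL]
    exact tsum_congr fun n => by rw [hcoeff n]
  rw [hsum]
  have hTT : (∫ x in a..(a + T), ‖f x‖ ^ 2)
      = T * ∫ t : AddCircle T, ‖F t‖ ^ 2 ∂AddCircle.haarAddCircle := by
    rw [← hIoc, hpre, hvint]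
  rw [hTT]
  field_simp


lemma coeff_rel {T : ℝ} [hT : Fact (0 < T)] {a : ℝ} {v v' : ℝ → ℂ}
    (hint : IntervalIntegrable v' volume a (a + T))
    (hv : ∀ x ∈ Icc a (a + T), v x = ∫ s in a..x, v' s)
    (hvb : v (a + T) = 0) {n : ℤ} (hn : n ≠ 0) :
    ‖fourierCoeff (AddCircle.liftIoc T a v) n‖
      ≤ (T / (2 * π)) * ‖fourierCoeff (AddCircle.liftIoc T a v') n‖ := by
  have hT0 : (0:ℝ) < T := hT.out
  have hab : a ≤ a + T := by linarith
  set e : ℝ → ℂ := fun t => fourier (-n) (t : AddCircle T) with he_def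
  have he : Continuous e :=
    (map_continuous (fourier (-n) : C(AddCircle T, ℂ))).comp (AddCircle.continuous_mk' T)
  set C : ℂ := (T : ℂ) / (-2 * π * Complex.I * n) with hC_def
  -- interval integral forms of the coefficients
  have hcv : fourierCoeff (AddCircle.liftIoc T a v) n
      = (1 / T : ℝ) • ∫ x in a..(a + T), e x * v x := by
    rw [fourierCoeff_eq_intervalIntegral _ n a]
    congr 1
    rw [intervalIntegral.integral_of_le hab, intervalIntegral.integral_of_le hab]
    refine setIntegral_congr_fun measurableSet_Ioc fun x hx => ?_
    rw [AddCircle.liftIoc_coe_apply hx, smul_eq_mul]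
  have hcv' : fourierCoeff (AddCircle.liftIoc T a v') n
      = (1 / T : ℝ) • ∫ x in a..(a + T), e x * v' x := by
    rw [fourierCoeff_eq_intervalIntegral _ n a]
    congr 1
    rw [intervalIntegral.integral_of_le hab, intervalIntegral.integral_of_le hab]
    refine setIntegral_congr_fun measurableSet_Ioc fun x hx => ?_
    rw [AddCircle.liftIoc_coe_apply hx, smul_eq_mul]
  -- key identity
  have hanti : ∀ s : ℝ, (∫ t in s..(a + T), e t) = C * e (a + T) - C * e s := by
    intro s
    have := intervalIntegral.integral_eq_sub_of_hasDerivAt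
      (f := fun y : ℝ => C * e y) (f' := e)
      (fun x _ => by simpa [hC_def, he_def] using has_antideriv_at_fourier_neg hT hn x)
      (he.intervalIntegrable s (a + T))
    simpa using this
  have hv'zero : (∫ s in a..(a + T), v' s) = 0 := by
    rw [← hv (a + T) (right_mem_Icc.mpr hab)]; exact hvb
  have hkey : (∫ x in a..(a + T), e x * v x) = -C * ∫ x in a..(a + T), e x * v' x := by
    have h1 : (∫ x in a..(a + T), e x * v x)
        = ∫ x in a..(a + T), e x * ∫ s in a..x, v' s := by
      refine intervalIntegral.integral_congr fun x hx => ?_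
      rw [uIcc_of_le hab] at hx
      rw [hv x hx]
    rw [h1, swap_tri hab hint.1 he]
    have h2 : (∫ s in a..(a + T), v' s * ∫ t in s..(a + T), e t)
        = ∫ s in a..(a + T), (v' s * (C * e (a + T)) - v' s * (C * e s)) := by
      refine intervalIntegral.integral_congr fun s _ => ?_
      rw [hanti s, mul_sub]
    rw [h2, intervalIntegral.integral_sub (hint.mul_const _)
      ((hint.mul_continuousOn (g := fun s => C * e s) ((continuous_const.mul he : Continuous fun s => C * e s).continuousOn)))]
    rw [intervalIntegral.integral_mul_const, hv'zero, zero_mul, zero_sub]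
    rw [← intervalIntegral.integral_const_mul]
    rw [← intervalIntegral.integral_neg]
    congr 1
    funext x
    ring
  have hCnorm : ‖C‖ = T / (2 * π * |(n : ℝ)|) := by
    rw [hC_def]
    rw [norm_div]
    simp [Complex.norm_real, abs_of_pos hT0, abs_of_pos Real.pi_pos, norm_mul]
  have hn1 : (1:ℝ) ≤ |(n : ℝ)| := by
    rw [← Int.cast_abs]
    exact_mod_cast Int.one_le_abs hn
  have hCle : ‖C‖ ≤ T / (2 * π) := by
    rw [hCnorm]
    rw [div_le_div_iff₀ (by positivity) (by positivity)]
    nlinarith [mul_le_mul_of_nonneg_left hn1 (by positivity : (0:ℝ) ≤ T * (2 * π))]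
  have hrel : fourierCoeff (AddCircle.liftIoc T a v) n
      = -C * fourierCoeff (AddCircle.liftIoc T a v') n := by
    rw [hcv, hcv', hkey, mul_smul_comm]
  rw [hrel, norm_mul, norm_neg]
  exact mul_le_mul_of_nonneg_right hCle (norm_nonneg _)

/-- `u ∈ W^{1,2}_0(-θ,θ)` with weak derivative `u'`: `u'` and `(u')^2` are
integrable on `(-θ,θ)`, `u` is the primitive of `u'` starting from `-θ`
(hence absolutely continuous with `u(-θ)=0`), and `u(θ)=0`. -/
def MemW120 (θ : ℝ) (u u' : ℝ → ℝ) : Prop :=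
  IntervalIntegrable u' volume (-θ) θ ∧
  IntervalIntegrable (fun t => (u' t)^2) volume (-θ) θ ∧
  (∀ x ∈ Set.Icc (-θ) θ, u x = ∫ t in (-θ)..x, u' t) ∧
  u θ = 0

/-- For every u ∈ W₀^{1,2}(-θ,θ):
∫ ((u')² - u²) ≥ (1-(θ/π)²)∫(u')² - (1/(2θ))(∫u)². -/
theorem stmt7 (θ : ℝ) (hθ : θ ∈ Set.Ioo 0 π) (u u' : ℝ → ℝ)
    (hu : MemW120 θ u u') :
    (∫ t in (-θ)..θ, ((u' t)^2 - (u t)^2)) ≥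
      (1 - (θ/π)^2) * (∫ t in (-θ)..θ, (u' t)^2) -
      (1/(2*θ)) * (∫ t in (-θ)..θ, u t)^2 := by

  obtain ⟨hθ0, hθπ⟩ := hθ
  have h2θ : (0:ℝ) < 2*θ := by linarith
  haveI : Fact ((0:ℝ) < 2*θ) := ⟨h2θ⟩
  have hbb : -θ + 2*θ = θ := by ring
  have hle : (-θ:ℝ) ≤ θ := by linarith
  obtain ⟨hw_int, hw2_int, hprim, hub⟩ := hu
  set vℂ : ℝ → ℂ := fun t => ((u t : ℝ) : ℂ) with hv_def
  set wℂ : ℝ → ℂ := fun t => ((u' t : ℝ) : ℂ) with hw_def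
  -- continuity of u on Icc
  have hIccInt : IntegrableOn u' (Icc (-θ) θ) := by
    rw [integrableOn_Icc_iff_integrableOn_Ioc]
    exact hw_int.1
  have hucont : ContinuousOn u (Icc (-θ) θ) := by
    have hp : ContinuousOn (fun x => ∫ t in (-θ)..x, u' t) (Icc (-θ) θ) := by
      have := continuousOn_primitive_interval (a := -θ) (b := θ) (μ := volume) (f := u')
        (by rwa [uIcc_of_le hle])
      rwa [uIcc_of_le hle] at this
    exact hp.congr hprim
  -- measurability/integrability data for Parseval
  have hmv : AEStronglyMeasurable vℂ (volume.restrict (Ioc (-θ) (-θ + 2*θ))) := by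
    rw [hbb]
    exact (Complex.continuous_ofReal.comp_continuousOn
      (hucont.mono Ioc_subset_Icc_self)).aestronglyMeasurable measurableSet_Ioc
  have hiv : IntegrableOn (fun x => ‖vℂ x‖ ^ 2) (Ioc (-θ) (-θ + 2*θ)) := by
    rw [hbb]
    have h1 : ContinuousOn (fun x => (u x)^2) (Icc (-θ) θ) := hucont.pow 2
    refine ((h1.integrableOn_Icc).mono_set Ioc_subset_Icc_self).congr_fun ?_ measurableSet_Ioc
    intro x _
    simp [hv_def, sq_abs]
  have hmw : AEStronglyMeasurable wℂ (volume.restrict (Ioc (-θ) (-θ + 2*θ))) := by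
    rw [hbb]
    exact Complex.continuous_ofReal.comp_aestronglyMeasurable hw_int.1.aestronglyMeasurable
  have hiw : IntegrableOn (fun x => ‖wℂ x‖ ^ 2) (Ioc (-θ) (-θ + 2*θ)) := by
    rw [hbb]
    refine hw2_int.1.congr_fun ?_ measurableSet_Ioc
    intro x _
    simp [hw_def, sq_abs]
  obtain ⟨Sv, hv_sum⟩ := parseval_ioc (T := 2*θ) (-θ) hmv hiv
  obtain ⟨Sw, hw_sum⟩ := parseval_ioc (T := 2*θ) (-θ) hmw hiw
  set A := ∫ t in (-θ)..θ, (u t)^2 with hA_def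
  set B := ∫ t in (-θ)..θ, (u' t)^2 with hB_def
  set M := ∫ t in (-θ)..θ, u t with hM_def
  have hA : (∫ x in (-θ)..(-θ + 2*θ), ‖vℂ x‖ ^ 2) = A := by
    rw [hbb]
    exact intervalIntegral.integral_congr fun x _ => by simp [hv_def, sq_abs]
  have hB : (∫ x in (-θ)..(-θ + 2*θ), ‖wℂ x‖ ^ 2) = B := by
    rw [hbb]
    exact intervalIntegral.integral_congr fun x _ => by simp [hw_def, sq_abs]
  rw [hA] at hv_sum
  rw [hB] at hw_sum
  -- coefficient relation
  have hint : IntervalIntegrable wℂ volume (-θ) (-θ + 2*θ) := by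
    rw [hbb]
    exact ⟨hw_int.1.ofReal, hw_int.2.ofReal⟩
  have hvI : ∀ x ∈ Icc (-θ) (-θ + 2*θ), vℂ x = ∫ s in (-θ)..x, wℂ s := by
    rw [hbb]
    intro x hx
    rw [hv_def]
    simp only
    rw [hprim x hx, intervalIntegral.integral_ofReal]
  have hvb : vℂ (-θ + 2*θ) = 0 := by
    rw [hbb, hv_def]
    simp [hub]
  have hrel : ∀ n : ℤ, n ≠ 0 →
      ‖fourierCoeff (AddCircle.liftIoc (2*θ) (-θ) vℂ) n‖
        ≤ ((2*θ) / (2*π)) * ‖fourierCoeff (AddCircle.liftIoc (2*θ) (-θ) wℂ) n‖ :=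
    fun n hn => coeff_rel hint hvI hvb hn
  -- zeroth coefficient
  have hc0 : fourierCoeff (AddCircle.liftIoc (2*θ) (-θ) vℂ) 0 = (1/(2*θ) : ℝ) • ((M : ℝ) : ℂ) := by
    rw [fourierCoeff_eq_intervalIntegral _ 0 (-θ)]
    congr 1
    have h1 : (∫ x in (-θ)..(-θ + 2*θ), fourier (-0 : ℤ) (x : AddCircle (2*θ)) •
        AddCircle.liftIoc (2*θ) (-θ) vℂ x) = ∫ x in (-θ)..(-θ + 2*θ), vℂ x := by
      rw [intervalIntegral.integral_of_le (by linarith), intervalIntegral.integral_of_le (by linarith)]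
      refine setIntegral_congr_fun measurableSet_Ioc fun x hx => ?_
      rw [AddCircle.liftIoc_coe_apply hx]
      simp [fourier_zero]
    rw [h1, hbb, hv_def]
    simp only
    rw [intervalIntegral.integral_ofReal]
  have hc0n : ‖fourierCoeff (AddCircle.liftIoc (2*θ) (-θ) vℂ) 0‖ ^ 2 = (1/(2*θ))^2 * M^2 := by
    rw [hc0, norm_smul]
    simp [mul_pow, abs_of_pos h2θ, sq_abs]
  -- comparison of sums
  set K := ((2*θ) / (2*π))^2 with hK_def
  have hK0 : (0:ℝ) ≤ K := sq_nonneg _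
  set c : ℤ → ℝ := fun n => ‖fourierCoeff (AddCircle.liftIoc (2*θ) (-θ) vℂ) n‖ ^ 2 with hc_def
  set g : ℤ → ℝ := fun n => ‖fourierCoeff (AddCircle.liftIoc (2*θ) (-θ) wℂ) n‖ ^ 2 with hg_def
  have hterm : ∀ n : ℤ, c n ≤ (if n = 0 then c 0 else 0) + K * g n := by
    intro n
    by_cases h : n = 0
    · subst h
      have h0 : (if (0:ℤ) = 0 then c 0 else 0) = c 0 := if_pos rfl
      rw [h0]
      have : 0 ≤ K * g 0 := mul_nonneg hK0 (sq_nonneg _)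
      linarith
    · simp only [if_neg h, zero_add]
      have := hrel n h
      calc c n ≤ (((2*θ) / (2*π)) * ‖fourierCoeff (AddCircle.liftIoc (2*θ) (-θ) wℂ) n‖)^2 :=
            pow_le_pow_left₀ (norm_nonneg _) this 2
        _ = K * g n := by rw [mul_pow]
  have hsb : Summable (fun n : ℤ => (if n = 0 then c 0 else 0) + K * g n) :=
    ((hasSum_ite_eq (0:ℤ) (c 0)).summable).add (Sw.mul_left K)
  have hsum_le : ∑' n : ℤ, c n ≤ c 0 + K * ∑' n : ℤ, g n := by
    calc ∑' n : ℤ, c n ≤ ∑' n : ℤ, ((if n = 0 then c 0 else 0) + K * g n) :=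
          Summable.tsum_le_tsum hterm Sv hsb
      _ = c 0 + K * ∑' n : ℤ, g n := by
          rw [Summable.tsum_add ((hasSum_ite_eq (0:ℤ) (c 0)).summable) (Sw.mul_left K),
            tsum_ite_eq, tsum_mul_left]
  rw [hv_sum, hw_sum] at hsum_le
  have hc0n : c 0 = (1/(2*θ))^2 * M^2 := hc0n
  rw [hc0n] at hsum_le
  -- hsum_le : (1/(2θ)) * A ≤ (1/(2θ))^2 * M^2 + K * ((1/(2θ)) * B)
  have hπ : (0:ℝ) < π := pi_pos
  have hKeq : K = (θ/π)^2 := by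
    rw [hK_def]
    congr 1
    rw [mul_div_mul_left _ _ (two_ne_zero)]
  rw [hKeq] at hsum_le
  have hfinal : A ≤ (1/(2*θ)) * M^2 + (θ/π)^2 * B := by
    have h := mul_le_mul_of_nonneg_left hsum_le h2θ.le
    have hcancel : (2*θ) * (1/(2*θ)) = 1 := mul_one_div_cancel h2θ.ne'
    nlinarith [h, hcancel]
  -- conclude
  have hu2_int : IntervalIntegrable (fun t => (u t)^2) volume (-θ) θ := by
    apply ContinuousOn.intervalIntegrable
    rw [uIcc_of_le hle]
    exact hucont.pow 2
  have hsplit : (∫ t in (-θ)..θ, ((u' t)^2 - (u t)^2)) = B - A :=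
    intervalIntegral.integral_sub hw2_int hu2_int
  rw [hsplit]
  linarith
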